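/- Consider the planar domain Ω = ⋃_{k≥0} Ω_k, where Ω_k is the k-th stage of Garnett's 4-corners Cantor construction inside the unit square with lower-left corner at (2k,0) (so Ω₀ is a unit square, Ω₁ is four squares of side 1/4 in the corners, etc., and dist(Ω_k,Ω_{k+1}) = 1). Then ∂Ω is 1-Ahlfors–David regular, but Ω fails the interior corkscrew condition: there is no c > 0 such that for every x ∈ ∂Ω and 0 < r < diam(∂Ω), B(x,r)∩Ω contains a ball of radius cr. -/

import Mathlib

open Set Metric MeasureTheory Filter Topology
open scoped ENNReal

noncomputable section

/-- `E ⊂ ℝ^{n+1}` is `n`-Ahlfors–David regular with constant `C`: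
`E` is closed and `C⁻¹ rⁿ ≤ Hⁿ(E ∩ B(x,r)) ≤ C rⁿ` for `x ∈ E`, `0 < r < diam E`. -/
def IsADR (n : ℕ) (E : Set (EuclideanSpace ℝ (Fin (n+1)))) (C : ℝ) : Prop :=
  IsClosed E ∧ 1 ≤ C ∧
  ∀ x ∈ E, ∀ r : ℝ, 0 < r → ENNReal.ofReal r < EMetric.diam E →
    ENNReal.ofReal (C⁻¹ * r ^ n) ≤ (Measure.hausdorffMeasure (n:ℝ)).restrict E (ball x r) ∧
    (Measure.hausdorffMeasure (n:ℝ)).restrict E (ball x r) ≤ ENNReal.ofReal (C * r ^ n)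

/-- Surface measure `σ = Hⁿ⌊E`. -/
def surf (n : ℕ) (E : Set (EuclideanSpace ℝ (Fin (n+1)))) :
    Measure (EuclideanSpace ℝ (Fin (n+1))) :=
  (Measure.hausdorffMeasure (n:ℝ)).restrict E

/-- The corner point of the unit square indexed by `j ∈ Fin 4`:
`(0,0), (3/4,0), (0,3/4), (3/4,3/4)`. -/
def cornerPt (j : Fin 4) : EuclideanSpace ℝ (Fin 2) :=
  WithLp.toLp 2 fun i => if i = 0 then (3/4 : ℝ) * ((j.val % 2 : ℕ) : ℝ) else (3/4 : ℝ) * ((j.val / 2 : ℕ) : ℝ)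

/-- The `k`-th stage of Garnett's 4-corners Cantor construction in the (open) unit square:
`stage 0` is the open unit square, and `stage (k+1)` consists of four copies of `stage k`
scaled by `1/4` and placed in the four corners. -/
def fourCornersStage : ℕ → Set (EuclideanSpace ℝ (Fin 2))
  | 0 => {x | ∀ i, x i ∈ Ioo (0:ℝ) 1}
  | (k+1) => ⋃ j : Fin 4, (fun x => cornerPt j + (1/4 : ℝ) • x) '' fourCornersStage k

/-- The horizontal translation placing the `k`-th stage in the unit square with lower-left
corner at `(2k, 0)`. -/
def shiftPt (k : ℕ) : EuclideanSpace ℝ (Fin 2) :=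
  WithLp.toLp 2 fun i => if i = 0 then (2 * k : ℝ) else 0

/-- The open set `Ω = ⋃_k Ω_k`, where `Ω_k` is the `k`-th 4-corners stage translated to
lower-left corner `(2k, 0)`. -/
def fourCornersDomain : Set (EuclideanSpace ℝ (Fin 2)) :=
  ⋃ k : ℕ, (fun x => shiftPt k + x) '' fourCornersStage k

/-! ### Auxiliary development -/

abbrev E2 := EuclideanSpace ℝ (Fin 2)

def SQ (A B : Set ℝ) : Set E2 := {x | x 0 ∈ A ∧ x 1 ∈ B}

lemma mem_SQ {A B : Set ℝ} {x : E2} : x ∈ SQ A B ↔ x 0 ∈ A ∧ x 1 ∈ B := Iff.rfl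

def e2h : E2 ≃ₜ (Fin 2 → ℝ) := (PiLp.continuousLinearEquiv 2 ℝ (fun _ : Fin 2 => ℝ)).toHomeomorph

lemma SQ_eq_preimage (A B : Set ℝ) :
    SQ A B = e2h ⁻¹' (univ.pi fun i => if i = 0 then A else B) := by
  ext x
  simp only [mem_SQ, mem_preimage, mem_univ_pi]
  constructor
  · rintro ⟨h0, h1⟩ i
    fin_cases i <;> simp [e2h, h0, h1]
  · intro h
    refine ⟨by simpa [e2h] using h 0, by simpa [e2h] using h 1⟩

lemma closure_SQ (A B : Set ℝ) : closure (SQ A B) = SQ (closure A) (closure B) := by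
  rw [SQ_eq_preimage, ← e2h.preimage_closure, closure_pi_set, SQ_eq_preimage]
  have h : (fun i : Fin 2 => closure (if i = 0 then A else B))
      = fun i => if i = 0 then closure A else closure B := by
    funext i; exact apply_ite closure (i = 0) A B
  rw [h]

lemma isOpen_SQ {A B : Set ℝ} (hA : IsOpen A) (hB : IsOpen B) : IsOpen (SQ A B) := by
  rw [SQ_eq_preimage]
  refine e2h.continuous.isOpen_preimage _ (isOpen_set_pi finite_univ ?_)
  intro i _
  fin_cases i <;> simpa

lemma isClosed_SQ {A B : Set ℝ} (hA : IsClosed A) (hB : IsClosed B) : IsClosed (SQ A B) := by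
  rw [SQ_eq_preimage]
  refine IsClosed.preimage e2h.continuous (isClosed_set_pi ?_)
  intro i _
  fin_cases i <;> simpa

/-! ### The 1-dimensional Cantor sets -/

def Ck : ℕ → Set ℝ
  | 0 => Ioo 0 1
  | (k+1) => (fun t => t/4) '' Ck k ∪ (fun t => 3/4 + t/4) '' Ck k

lemma Ck_subset (k : ℕ) : Ck k ⊆ Ioo 0 1 := by
  induction k with
  | zero => exact le_refl _
  | succ k ih =>
    rintro t (⟨s, hs, rfl⟩ | ⟨s, hs, rfl⟩) <;>
      · have := ih hs
        constructor <;> [nlinarith [this.1, this.2]; nlinarith [this.1, this.2]]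

def hq (a : ℝ) : ℝ ≃ₜ ℝ :=
  (Homeomorph.mulLeft₀ (4⁻¹:ℝ) (by norm_num)).trans (Homeomorph.addLeft a)

lemma hq_apply (a t : ℝ) : hq a t = a + t/4 := by
  show a + 4⁻¹ * t = a + t/4; ring

lemma img0 (s : Set ℝ) : (fun t : ℝ => t/4) '' s = hq 0 '' s := by
  apply congrArg (· '' s); funext t; rw [hq_apply]; ring

lemma img1 (s : Set ℝ) : (fun t : ℝ => 3/4 + t/4) '' s = hq (3/4) '' s := by
  apply congrArg (· '' s); funext t; rw [hq_apply]

lemma Ck_succ (k : ℕ) : Ck (k+1) = hq 0 '' Ck k ∪ hq (3/4) '' Ck k := by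
  rw [Ck, img0, img1]

lemma isOpen_Ck (k : ℕ) : IsOpen (Ck k) := by
  induction k with
  | zero => exact isOpen_Ioo
  | succ k ih =>
    rw [Ck_succ]
    exact ((hq 0).isOpen_image.2 ih).union ((hq (3/4)).isOpen_image.2 ih)

lemma closure_Ck_succ (k : ℕ) :
    closure (Ck (k+1)) = hq 0 '' closure (Ck k) ∪ hq (3/4) '' closure (Ck k) := by
  rw [Ck_succ, closure_union, (hq 0).image_closure, (hq (3/4)).image_closure]

lemma closure_Ck_subset (k : ℕ) : closure (Ck k) ⊆ Icc 0 1 :=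
  closure_minimal (fun t ht => Ioo_subset_Icc_self (Ck_subset k ht)) isClosed_Icc

lemma zero_mem_closure_Ck (k : ℕ) : (0:ℝ) ∈ closure (Ck k) := by
  induction k with
  | zero => rw [Ck]; rw [closure_Ioo (by norm_num)]; exact ⟨le_refl 0, by norm_num⟩
  | succ k ih =>
    rw [closure_Ck_succ]
    exact Or.inl ⟨0, ih, by rw [hq_apply]; ring⟩

/-- `q k = 4⁻ᵏ`. -/
def qs (k : ℕ) : ℝ := (4:ℝ)⁻¹ ^ k

lemma qs_pos (k : ℕ) : 0 < qs k := pow_pos (by norm_num) k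

lemma qs_succ (k : ℕ) : qs (k+1) = qs k / 4 := by
  rw [qs, qs, pow_succ]; ring

lemma qs_le_one (k : ℕ) : qs k ≤ 1 := pow_le_one₀ (by norm_num) (by norm_num)

lemma hq_image_closure_subset (k : ℕ) (a : ℝ) (ha : a = 0 ∨ a = 3/4) :
    hq a '' closure (Ck k) ⊆ closure (Ck (k+1)) := by
  rw [closure_Ck_succ]
  rcases ha with rfl | rfl
  · exact subset_union_left
  · exact subset_union_right

lemma gen_succ_aux (a : ℝ) (k : ℕ) (ha : a = 0 ∨ a = 3/4) (s p : ℝ)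
    (hp1 : s ∈ Icc p (p + qs k)) (hp2 : Icc p (p + qs k) ⊆ closure (Ck k)) :
    ∃ p', hq a s ∈ Icc p' (p' + qs (k+1)) ∧ Icc p' (p' + qs (k+1)) ⊆ closure (Ck (k+1)) := by
  refine ⟨a + p/4, ?_, ?_⟩
  · rw [hq_apply, qs_succ]
    obtain ⟨h1, h2⟩ := hp1
    rw [mem_Icc]
    constructor <;> linarith
  · intro u hu
    apply hq_image_closure_subset k a ha
    refine ⟨(u - a) * 4, hp2 ?_, by rw [hq_apply]; ring⟩
    obtain ⟨h1, h2⟩ := hu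
    rw [qs_succ] at h2
    constructor <;> linarith

/-- every point of `closure (Ck k)` lies in a "generation-k" closed interval of length
`4⁻ᵏ` contained in `closure (Ck k)`. -/
lemma gen_interval (k : ℕ) : ∀ t ∈ closure (Ck k),
    ∃ p, t ∈ Icc p (p + qs k) ∧ Icc p (p + qs k) ⊆ closure (Ck k) := by
  induction k with
  | zero =>
    intro t ht
    refine ⟨0, ?_, ?_⟩
    · simpa [qs] using closure_Ck_subset 0 ht
    · rw [Ck, closure_Ioo (by norm_num)]; simp [qs]
  | succ k ih =>
    intro t ht
    rw [closure_Ck_succ] at ht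
    rcases ht with ⟨s, hs, rfl⟩ | ⟨s, hs, rfl⟩
    · obtain ⟨p, hp1, hp2⟩ := ih s hs
      exact gen_succ_aux 0 k (Or.inl rfl) s p hp1 hp2
    · obtain ⟨p, hp1, hp2⟩ := ih s hs
      exact gen_succ_aux (3/4) k (Or.inr rfl) s p hp1 hp2

lemma Ck_split (k : ℕ) : Ck (k+1) ⊆ Ioo 0 (1/4) ∪ Ioo (3/4) 1 := by
  rw [Ck_succ]
  rintro t (⟨s, hs, rfl⟩ | ⟨s, hs, rfl⟩) <;> obtain ⟨h1, h2⟩ := Ck_subset k hs <;>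
    rw [hq_apply]
  · exact Or.inl ⟨by linarith, by linarith⟩
  · exact Or.inr ⟨by linarith, by linarith⟩

/-- `Ck k` contains no interval longer than `4⁻ᵏ`. -/
lemma no_long_interval (k : ℕ) : ∀ a b : ℝ, Ioo a b ⊆ Ck k → b - a ≤ qs k := by
  induction k with
  | zero =>
    intro a b h
    rcases le_or_gt b a with hba | hab
    · have := qs_pos 0; linarith
    · have h2 := (Ioo_subset_Ioo_iff hab).1 (h.trans (Ck_subset 0))
      simp only [qs, pow_zero]
      linarith [h2.1, h2.2]
  | succ k ih =>
    intro a b h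
    rcases le_or_gt b a with hba | hab
    · have := qs_pos (k+1); linarith
    · -- the interval is contained in one of the two halves
      have hmid : (a+b)/2 ∈ Ioo a b := ⟨by linarith, by linarith⟩
      have hhalf : (1:ℝ)/2 ∉ Ck (k+1) := by
        intro hc
        rcases Ck_split k hc with ⟨_, h2⟩ | ⟨h1, _⟩ <;> linarith
      have hsplit : (∀ u ∈ Ioo a b, u < 1/2) ∨ (∀ u ∈ Ioo a b, 1/2 < u) := by
        by_contra hcon
        push_neg at hcon
        obtain ⟨⟨u, hu, hu2⟩, ⟨v, hv, hv2⟩⟩ := hcon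
        have hu2 : 1/2 < u := by
          rcases Ck_split k (h hu) with ⟨_, h2⟩ | ⟨h1, _⟩
          · linarith
          · linarith
        have hv2 : v < 1/2 := by
          rcases Ck_split k (h hv) with ⟨_, h2⟩ | ⟨h1, _⟩
          · linarith
          · rcases hv2.lt_or_eq with h' | h'
            · linarith
            · exact absurd (h' ▸ h hv) hhalf
        exact hhalf (h ⟨by linarith [hv.1], by linarith [hu.2]⟩)
      rcases hsplit with hL | hR
      · -- contained in the image of `hq 0`
        have : Ioo (4*a) (4*b) ⊆ Ck k := by
          intro u hu
          have h4 : u/4 ∈ Ioo a b := ⟨by linarith [hu.1], by linarith [hu.2]⟩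
          have := h h4
          rw [Ck_succ] at this
          rcases this with ⟨s, hs, he⟩ | ⟨s, hs, he⟩
          · rw [hq_apply] at he
            have : s = u := by linarith
            rwa [← this]
          · rw [hq_apply] at he
            have := hL _ h4
            have hs1 := (Ck_subset k hs).1
            linarith
        have := ih _ _ this
        rw [qs_succ]
        linarith
      · -- contained in the image of `hq (3/4)`
        have : Ioo (4*a - 3) (4*b - 3) ⊆ Ck k := by
          intro u hu
          have h4 : 3/4 + u/4 ∈ Ioo a b := ⟨by linarith [hu.1], by linarith [hu.2]⟩
          have := h h4
          rw [Ck_succ] at this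
          rcases this with ⟨s, hs, he⟩ | ⟨s, hs, he⟩
          · rw [hq_apply] at he
            have := hR _ h4
            have hs1 := (Ck_subset k hs).2
            linarith
          · rw [hq_apply] at he
            have : s = u := by linarith
            rwa [← this]
        have := ih _ _ this
        rw [qs_succ]
        linarith

/-! ### E2 coordinates -/

def pt (a b : ℝ) : E2 := WithLp.toLp 2 fun i => if i = 0 then a else b

@[simp] lemma pt_zero (a b : ℝ) : pt a b 0 = a := rfl
@[simp] lemma pt_one (a b : ℝ) : pt a b 1 = b := by
  show (if (1 : Fin 2) = 0 then a else b) = b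
  norm_num

lemma eq_pt (x : E2) : x = pt (x 0) (x 1) := by
  ext i
  fin_cases i
  · rfl
  · show x 1 = pt (x 0) (x 1) 1
    rw [pt_one]

@[simp] lemma add_apply' (x y : E2) (i : Fin 2) : (x + y) i = x i + y i := rfl
@[simp] lemma smul_apply' (c : ℝ) (x : E2) (i : Fin 2) : (c • x) i = c * x i := rfl

lemma corner_cases (j : Fin 4) :
    (cornerPt j 0 = 0 ∨ cornerPt j 0 = 3/4) ∧ (cornerPt j 1 = 0 ∨ cornerPt j 1 = 3/4) := by
  fin_cases j <;> norm_num [cornerPt]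

lemma corner_exists (a b : ℝ) (ha : a = 0 ∨ a = 3/4) (hb : b = 0 ∨ b = 3/4) :
    ∃ j : Fin 4, cornerPt j 0 = a ∧ cornerPt j 1 = b := by
  rcases ha with rfl | rfl <;> rcases hb with rfl | rfl
  · exact ⟨0, by norm_num [cornerPt]⟩
  · exact ⟨2, by norm_num [cornerPt]⟩
  · exact ⟨1, by norm_num [cornerPt]⟩
  · have h3 : ((3 : Fin 4) : ℕ) = 3 := rfl
    exact ⟨3, by norm_num [cornerPt, h3]⟩

/-- the key characterization of the stages as products. -/
lemma stage_eq (k : ℕ) : fourCornersStage k = SQ (Ck k) (Ck k) := by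
  induction k with
  | zero =>
    ext x
    show (∀ i, x i ∈ Ioo (0:ℝ) 1) ↔ _
    rw [mem_SQ, Fin.forall_fin_two]
    rfl
  | succ k ih =>
    ext x
    constructor
    · rintro ⟨S, ⟨j, rfl⟩, y, hy, rfl⟩
      rw [ih, mem_SQ] at hy
      have hc := corner_cases j
      constructor
      · show cornerPt j 0 + (1/4) * y 0 ∈ Ck (k+1)
        rw [Ck_succ]
        have : cornerPt j 0 + (1/4) * y 0 = hq (cornerPt j 0) (y 0) := by
          rw [hq_apply]; ring
        rw [this]
        rcases hc.1 with h | h <;> rw [h]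
        · exact Or.inl ⟨y 0, hy.1, rfl⟩
        · exact Or.inr ⟨y 0, hy.1, rfl⟩
      · show cornerPt j 1 + (1/4) * y 1 ∈ Ck (k+1)
        rw [Ck_succ]
        have : cornerPt j 1 + (1/4) * y 1 = hq (cornerPt j 1) (y 1) := by
          rw [hq_apply]; ring
        rw [this]
        rcases hc.2 with h | h <;> rw [h]
        · exact Or.inl ⟨y 1, hy.2, rfl⟩
        · exact Or.inr ⟨y 1, hy.2, rfl⟩
    · rintro ⟨h0, h1⟩
      rw [Ck_succ] at h0 h1
      have ex0 : ∃ a s, (a = 0 ∨ a = 3/4) ∧ s ∈ Ck k ∧ x 0 = a + s/4 := by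
        rcases h0 with ⟨s, hs, he⟩ | ⟨s, hs, he⟩
        · exact ⟨0, s, Or.inl rfl, hs, by rw [← he, hq_apply]⟩
        · exact ⟨3/4, s, Or.inr rfl, hs, by rw [← he, hq_apply]⟩
      have ex1 : ∃ b t, (b = 0 ∨ b = 3/4) ∧ t ∈ Ck k ∧ x 1 = b + t/4 := by
        rcases h1 with ⟨t, ht, he⟩ | ⟨t, ht, he⟩
        · exact ⟨0, t, Or.inl rfl, ht, by rw [← he, hq_apply]⟩
        · exact ⟨3/4, t, Or.inr rfl, ht, by rw [← he, hq_apply]⟩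
      obtain ⟨a, s, ha, hs, hxa⟩ := ex0
      obtain ⟨b, t, hb, ht, hxb⟩ := ex1
      obtain ⟨j, hj0, hj1⟩ := corner_exists a b ha hb
      refine mem_iUnion.2 ⟨j, pt s t, ?_, ?_⟩
      · rw [ih, mem_SQ]; exact ⟨by simpa, by simpa⟩
      · ext i
        fin_cases i
        · show cornerPt j 0 + (1/4) * (pt s t 0) = x 0
          rw [pt_zero, hj0, hxa]; ring
        · show cornerPt j 1 + (1/4) * (pt s t 1) = x 1
          rw [pt_one, hj1, hxb]; ring

/-! ### metric facts on E2 -/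

lemma dist_coords (x y : E2) : dist x y = Real.sqrt ((x 0 - y 0)^2 + (x 1 - y 1)^2) := by
  rw [EuclideanSpace.dist_eq, Fin.sum_univ_two]
  simp [Real.dist_eq, sq_abs]

lemma coord0_le_dist (x y : E2) : |x 0 - y 0| ≤ dist x y := by
  rw [dist_coords, ← Real.sqrt_sq_eq_abs]
  apply Real.sqrt_le_sqrt
  nlinarith [sq_nonneg (x 1 - y 1)]

lemma coord1_le_dist (x y : E2) : |x 1 - y 1| ≤ dist x y := by
  rw [dist_coords, ← Real.sqrt_sq_eq_abs]
  apply Real.sqrt_le_sqrt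
  nlinarith [sq_nonneg (x 0 - y 0)]

lemma dist_le_coords (x y : E2) : dist x y ≤ |x 0 - y 0| + |x 1 - y 1| := by
  rw [dist_coords]
  have h : (x 0 - y 0)^2 + (x 1 - y 1)^2 ≤ (|x 0 - y 0| + |x 1 - y 1|)^2 := by
    have h0 : |x 0 - y 0|^2 = (x 0 - y 0)^2 := sq_abs _
    have h1 : |x 1 - y 1|^2 = (x 1 - y 1)^2 := sq_abs _
    nlinarith [abs_nonneg (x 0 - y 0), abs_nonneg (x 1 - y 1)]
  calc Real.sqrt ((x 0 - y 0)^2 + (x 1 - y 1)^2) ≤ Real.sqrt ((|x 0 - y 0| + |x 1 - y 1|)^2) :=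
        Real.sqrt_le_sqrt h
    _ = |x 0 - y 0| + |x 1 - y 1| := Real.sqrt_sq (by positivity)

def ptV (a : ℝ) : ℝ → E2 := fun t => pt a t
def ptH (b : ℝ) : ℝ → E2 := fun t => pt t b

lemma isometry_ptV (a : ℝ) : Isometry (ptV a) := by
  refine Isometry.of_dist_eq fun t s => ?_
  show dist (pt a t) (pt a s) = dist t s
  rw [dist_coords]
  simp [Real.dist_eq, Real.sqrt_sq_eq_abs]

lemma isometry_ptH (b : ℝ) : Isometry (ptH b) := by
  refine Isometry.of_dist_eq fun t s => ?_
  show dist (pt t b) (pt s b) = dist t s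
  rw [dist_coords]
  simp [Real.dist_eq, Real.sqrt_sq_eq_abs]

local notation "μ1" => (Measure.hausdorffMeasure (1:ℝ) : Measure E2)

lemma mu_ptV (a : ℝ) (S : Set ℝ) : μ1 (ptV a '' S) = volume S := by
  rw [(isometry_ptV a).hausdorffMeasure_image (Or.inl zero_le_one), MeasureTheory.hausdorffMeasure_real]

lemma mu_ptH (b : ℝ) (S : Set ℝ) : μ1 (ptH b '' S) = volume S := by
  rw [(isometry_ptH b).hausdorffMeasure_image (Or.inl zero_le_one), MeasureTheory.hausdorffMeasure_real]

lemma mu_line_le_diam {a : ℝ} {X : Set E2} (hX : X ⊆ range (ptV a)) :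
    μ1 X ≤ EMetric.diam X := by
  have h1 : ptV a '' (ptV a ⁻¹' X) = X := image_preimage_eq_of_subset hX
  calc μ1 X = volume (ptV a ⁻¹' X) := by rw [← h1, mu_ptV]; rw [h1]
    _ ≤ EMetric.diam (ptV a ⁻¹' X) := Real.volume_le_diam _
    _ = EMetric.diam X := by unfold EMetric.diam; rw [← (isometry_ptV a).ediam_image, h1]

lemma mu_lineH_le_diam {b : ℝ} {X : Set E2} (hX : X ⊆ range (ptH b)) :
    μ1 X ≤ EMetric.diam X := by
  have h1 : ptH b '' (ptH b ⁻¹' X) = X := image_preimage_eq_of_subset hX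
  calc μ1 X = volume (ptH b ⁻¹' X) := by rw [← h1, mu_ptH]; rw [h1]
    _ ≤ EMetric.diam (ptH b ⁻¹' X) := Real.volume_le_diam _
    _ = EMetric.diam X := by unfold EMetric.diam; rw [← (isometry_ptH b).ediam_image, h1]

/-! ### the boundary sets -/

def Bd (k : ℕ) : Set E2 := closure (fourCornersStage k) \ fourCornersStage k

lemma closure_stage (k : ℕ) :
    closure (fourCornersStage k) = SQ (closure (Ck k)) (closure (Ck k)) := by
  rw [stage_eq, closure_SQ]

lemma isOpen_stage (k : ℕ) : IsOpen (fourCornersStage k) := by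
  rw [stage_eq]; exact isOpen_SQ (isOpen_Ck k) (isOpen_Ck k)

lemma Bd_eq_frontier (k : ℕ) : Bd k = frontier (fourCornersStage k) := by
  rw [frontier, (isOpen_stage k).interior_eq]; rfl

lemma isClosed_Bd (k : ℕ) : IsClosed (Bd k) := by
  rw [Bd_eq_frontier]; exact isClosed_frontier

lemma Bd_subset_box (k : ℕ) : Bd k ⊆ SQ (Icc 0 1) (Icc 0 1) := by
  intro x hx
  have h := (closure_stage k) ▸ hx.1
  exact ⟨closure_Ck_subset k h.1, closure_Ck_subset k h.2⟩

lemma isBounded_box : Bornology.IsBounded (SQ (Icc 0 1) (Icc 0 1)) := by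
  apply Bornology.IsBounded.subset (Metric.isBounded_ball (x := (0:E2)) (r := (2:ℝ)))
  intro x hx
  rw [mem_ball, dist_coords]
  obtain ⟨⟨h1, h2⟩, ⟨h3, h4⟩⟩ := hx
  have : (x 0 - (0:E2) 0)^2 + (x 1 - (0:E2) 1)^2 ≤ 2 := by
    have e0 : (0:E2) 0 = 0 := rfl
    have e1 : (0:E2) 1 = 0 := rfl
    rw [e0, e1]
    nlinarith
  calc Real.sqrt ((x 0 - (0:E2) 0)^2 + (x 1 - (0:E2) 1)^2) ≤ Real.sqrt 2 := Real.sqrt_le_sqrt this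
    _ < 2 := by
      nlinarith [Real.sq_sqrt (by norm_num : (0:ℝ) ≤ 2), Real.sqrt_nonneg 2]

lemma isCompact_Bd (k : ℕ) : IsCompact (Bd k) := by
  rw [isCompact_iff_isClosed_bounded]
  exact ⟨isClosed_Bd k, isBounded_box.subset (Bd_subset_box k)⟩

/-- the four contraction homeomorphisms -/
def hq2 (c : E2) : E2 ≃ₜ E2 :=
  (Homeomorph.smulOfNeZero (4⁻¹:ℝ) (by norm_num)).trans (Homeomorph.addLeft c)

lemma hq2_apply (c : E2) (x : E2) : hq2 c x = c + (1/4:ℝ) • x := by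
  show c + (4⁻¹:ℝ) • x = c + (1/4:ℝ) • x
  norm_num

lemma stage_succ (k : ℕ) :
    fourCornersStage (k+1) = ⋃ j : Fin 4, hq2 (cornerPt j) '' fourCornersStage k := by
  show (⋃ j : Fin 4, (fun x => cornerPt j + (1/4:ℝ) • x) '' fourCornersStage k) = _
  apply iUnion_congr
  intro j
  apply congrArg (· '' fourCornersStage k)
  funext x
  rw [hq2_apply]

def box (j : Fin 4) : Set E2 :=
  SQ (Icc (cornerPt j 0) (cornerPt j 0 + 4⁻¹)) (Icc (cornerPt j 1) (cornerPt j 1 + 4⁻¹))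

lemma img_subset_box (j : Fin 4) {s : Set E2} (hs : s ⊆ SQ (Icc 0 1) (Icc 0 1)) :
    hq2 (cornerPt j) '' s ⊆ box j := by
  rintro y ⟨x, hx, rfl⟩
  obtain ⟨⟨a1, a2⟩, ⟨b1, b2⟩⟩ := hs hx
  rw [hq2_apply]
  constructor
  · show cornerPt j 0 + (1/4) * x 0 ∈ Icc _ _
    constructor <;> [linarith; · show _ ≤ cornerPt j 0 + 4⁻¹; linarith]
  · show cornerPt j 1 + (1/4) * x 1 ∈ Icc _ _
    constructor <;> [linarith; · show _ ≤ cornerPt j 1 + 4⁻¹; linarith]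

lemma corner_coord (j : Fin 4) : cornerPt j 0 = 3/4 * ((j.val % 2 : ℕ) : ℝ) ∧
    cornerPt j 1 = 3/4 * ((j.val / 2 : ℕ) : ℝ) := by
  constructor
  · rfl
  · show (if (1 : Fin 2) = 0 then (3/4 : ℝ) * ((j.val % 2 : ℕ) : ℝ) else (3/4 : ℝ) * ((j.val / 2 : ℕ) : ℝ)) = _
    norm_num

lemma corner_diff {j j' : Fin 4} (h : j ≠ j') :
    cornerPt j 0 ≠ cornerPt j' 0 ∨ cornerPt j 1 ≠ cornerPt j' 1 := by
  by_contra hc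
  push_neg at hc
  obtain ⟨h0, h1⟩ := hc
  rw [(corner_coord j).1, (corner_coord j').1] at h0
  rw [(corner_coord j).2, (corner_coord j').2] at h1
  have e0 : j.val % 2 = j'.val % 2 := by exact_mod_cast mul_left_cancel₀ (by norm_num : (3/4:ℝ) ≠ 0) h0
  have e1 : j.val / 2 = j'.val / 2 := by exact_mod_cast mul_left_cancel₀ (by norm_num : (3/4:ℝ) ≠ 0) h1
  apply h
  apply Fin.ext
  omega

lemma box_disjoint {j j' : Fin 4} (h : j ≠ j') : box j ∩ box j' = ∅ := by
  ext x
  simp only [mem_inter_iff, mem_empty_iff_false, iff_false]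
  rintro ⟨⟨hx0, hx1⟩, ⟨hy0, hy1⟩⟩
  rcases corner_diff h with hne | hne
  · rcases (corner_cases j).1 with e1 | e1 <;> rcases (corner_cases j').1 with e2 | e2 <;>
      rw [e1] at hx0 hne <;> rw [e2] at hy0 hne
    · exact hne rfl
    · linarith [hx0.2, hy0.1]
    · linarith [hx0.1, hy0.2]
    · exact hne rfl
  · rcases (corner_cases j).2 with e1 | e1 <;> rcases (corner_cases j').2 with e2 | e2 <;>
      rw [e1] at hx1 hne <;> rw [e2] at hy1 hne
    · exact hne rfl
    · linarith [hx1.2, hy1.1]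
    · linarith [hx1.1, hy1.2]
    · exact hne rfl

lemma closure_stage_succ (k : ℕ) :
    closure (fourCornersStage (k+1)) = ⋃ j : Fin 4, hq2 (cornerPt j) '' closure (fourCornersStage k) := by
  rw [stage_succ, closure_iUnion_of_finite]
  exact iUnion_congr fun j => ((hq2 (cornerPt j)).image_closure _).symm

lemma Bd_succ (k : ℕ) : Bd (k+1) = ⋃ j : Fin 4, hq2 (cornerPt j) '' Bd k := by
  have hsub : ∀ j : Fin 4, hq2 (cornerPt j) '' closure (fourCornersStage k) ⊆ box j := by
    intro j
    apply img_subset_box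
    rw [closure_stage]
    exact fun x hx => ⟨closure_Ck_subset k hx.1, closure_Ck_subset k hx.2⟩
  ext x
  constructor
  · rintro ⟨h1, h2⟩
    rw [closure_stage_succ] at h1
    obtain ⟨S, ⟨j, rfl⟩, y, hy, rfl⟩ := h1
    refine mem_iUnion.2 ⟨j, y, ⟨hy, fun hc => h2 ?_⟩, rfl⟩
    rw [stage_succ]
    exact mem_iUnion.2 ⟨j, y, hc, rfl⟩
  · rintro ⟨S, ⟨j, rfl⟩, y, ⟨hy1, hy2⟩, rfl⟩
    constructor
    · rw [closure_stage_succ]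
      exact mem_iUnion.2 ⟨j, y, hy1, rfl⟩
    · intro hc
      rw [stage_succ] at hc
      obtain ⟨S', ⟨j', rfl⟩, z, hz, he⟩ := hc
      by_cases hjj : j = j'
      · subst hjj
        have : z = y := (hq2 (cornerPt j)).injective he
        exact hy2 (this ▸ hz)
      · have hx1 : hq2 (cornerPt j) y ∈ box j := hsub j ⟨y, hy1, rfl⟩
        have hx2 : hq2 (cornerPt j) y ∈ box j' := by
          refine hsub j' ⟨z, subset_closure hz, he⟩
        have := box_disjoint hjj
        rw [eq_empty_iff_forall_notMem] at this
        exact this _ ⟨hx1, hx2⟩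

/-! ### measure scaling -/

open scoped Pointwise

lemma hq2_image_eq_vadd_smul (c : E2) (s : Set E2) :
    (hq2 c) '' s = c +ᵥ ((4⁻¹:ℝ) • s) := by
  ext y
  constructor
  · rintro ⟨x, hx, rfl⟩
    exact ⟨(4⁻¹:ℝ) • x, smul_mem_smul_set hx, rfl⟩
  · rintro ⟨z, ⟨x, hx, rfl⟩, rfl⟩
    exact ⟨x, hx, rfl⟩

lemma mu_hq2 (c : E2) (s : Set E2) : μ1 ((hq2 c) '' s) = 4⁻¹ * μ1 s := by
  rw [hq2_image_eq_vadd_smul,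
    MeasureTheory.hausdorffMeasure_vadd _ (Or.inl zero_le_one),
    Measure.hausdorffMeasure_smul₀ zero_le_one (by norm_num : (4⁻¹:ℝ) ≠ 0)]
  simp [ENNReal.smul_def]

/-! ### the boundary of the unit square -/

lemma mem_ptV_image {a : ℝ} {S : Set ℝ} {x : E2} (h0 : x 0 = a) (h1 : x 1 ∈ S) :
    x ∈ ptV a '' S := by
  refine ⟨x 1, h1, ?_⟩
  show pt a (x 1) = x
  conv_rhs => rw [eq_pt x]
  rw [h0]

lemma mem_ptH_image {b : ℝ} {S : Set ℝ} {x : E2} (h1 : x 1 = b) (h0 : x 0 ∈ S) :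
    x ∈ ptH b '' S := by
  refine ⟨x 0, h0, ?_⟩
  show pt (x 0) b = x
  conv_rhs => rw [eq_pt x]
  rw [h1]

lemma closure_Ck_zero : closure (Ck 0) = Icc 0 1 := by
  rw [Ck, closure_Ioo (by norm_num : (0:ℝ) ≠ 1)]

lemma Bd_zero_subset : Bd 0 ⊆
    (ptV 0 '' Icc 0 1 ∪ ptV 1 '' Icc 0 1) ∪ (ptH 0 '' Icc 0 1 ∪ ptH 1 '' Icc 0 1) := by
  rintro x ⟨h1, h2⟩
  rw [closure_stage, closure_Ck_zero] at h1
  rw [stage_eq] at h2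
  obtain ⟨hx0, hx1⟩ := h1
  have h2' : x 0 ∉ Ioo (0:ℝ) 1 ∨ x 1 ∉ Ioo (0:ℝ) 1 := by
    by_contra hc
    push_neg at hc
    exact h2 ⟨hc.1, hc.2⟩
  rcases h2' with h | h
  · have : x 0 = 0 ∨ x 0 = 1 := by
      rcases hx0.1.lt_or_eq with h' | h'
      · rcases hx0.2.lt_or_eq with h'' | h''
        · exact absurd ⟨h', h''⟩ h
        · exact Or.inr h''
      · exact Or.inl h'.symm
    rcases this with h' | h'
    · exact Or.inl (Or.inl (mem_ptV_image h' hx1))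
    · exact Or.inl (Or.inr (mem_ptV_image h' hx1))
  · have : x 1 = 0 ∨ x 1 = 1 := by
      rcases hx1.1.lt_or_eq with h' | h'
      · rcases hx1.2.lt_or_eq with h'' | h''
        · exact absurd ⟨h', h''⟩ h
        · exact Or.inr h''
      · exact Or.inl h'.symm
    rcases this with h' | h'
    · exact Or.inr (Or.inl (mem_ptH_image h' hx0))
    · exact Or.inr (Or.inr (mem_ptH_image h' hx0))

lemma Bd_zero_supset : ptV 0 '' Icc 0 1 ∪ ptV 1 '' Icc 0 1 ⊆ Bd 0 := by
  have key : ∀ a : ℝ, a = 0 ∨ a = 1 → ptV a '' Icc 0 1 ⊆ Bd 0 := by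
    rintro a ha _ ⟨t, ht, rfl⟩
    constructor
    · rw [closure_stage, closure_Ck_zero]
      refine ⟨?_, ?_⟩
      · show a ∈ Icc (0:ℝ) 1
        rcases ha with rfl | rfl <;> norm_num
      · show t ∈ Icc (0:ℝ) 1
        exact ht
    · rw [stage_eq]
      intro hc
      have : a ∈ Ioo (0:ℝ) 1 := hc.1
      rcases ha with rfl | rfl
      · exact lt_irrefl 0 this.1
      · exact lt_irrefl 1 this.2
  rintro x (hx | hx)
  · exact key 0 (Or.inl rfl) hx
  · exact key 1 (Or.inr rfl) hx

lemma mu_Bd_zero_le : μ1 (Bd 0) ≤ 4 := by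
  refine le_trans (measure_mono Bd_zero_subset) ?_
  refine le_trans (measure_union_le _ _) ?_
  have h1 : μ1 (ptV 0 '' Icc 0 1 ∪ ptV 1 '' Icc 0 1) ≤ 2 := by
    refine le_trans (measure_union_le _ _) ?_
    rw [mu_ptV, mu_ptV, Real.volume_Icc]
    norm_num
  have h2 : μ1 (ptH 0 '' Icc 0 1 ∪ ptH 1 '' Icc 0 1) ≤ 2 := by
    refine le_trans (measure_union_le _ _) ?_
    rw [mu_ptH, mu_ptH, Real.volume_Icc]
    norm_num
  calc μ1 _ + μ1 _ ≤ 2 + 2 := add_le_add h1 h2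
    _ = 4 := by norm_num

lemma mu_Bd_zero_ge : 2 ≤ μ1 (Bd 0) := by
  refine le_trans ?_ (measure_mono Bd_zero_supset)
  have hdisj : Disjoint (ptV 0 '' Icc 0 1) (ptV 1 '' (Icc 0 1 : Set ℝ)) := by
    rw [disjoint_left]
    rintro x ⟨t, _, rfl⟩ ⟨s, _, he⟩
    have h' : (ptV 1 s) 0 = (ptV 0 t) 0 := by rw [he]
    have : (1:ℝ) = 0 := h'
    norm_num at this
  have hmeas : MeasurableSet (ptV 1 '' (Icc 0 1 : Set ℝ)) :=
    ((isCompact_Icc.image (isometry_ptV 1).continuous).isClosed).measurableSet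
  rw [measure_union hdisj hmeas, mu_ptV, mu_ptV, Real.volume_Icc]
  norm_num

lemma mu_Bd_le (k : ℕ) : μ1 (Bd k) ≤ 4 := by
  induction k with
  | zero => exact mu_Bd_zero_le
  | succ k ih =>
    rw [Bd_succ]
    refine le_trans (measure_iUnion_le _) ?_
    rw [tsum_fintype]
    have : ∀ j : Fin 4, μ1 ((hq2 (cornerPt j)) '' Bd k) ≤ 1 := by
      intro j
      rw [mu_hq2]
      calc (4⁻¹ : ℝ≥0∞) * μ1 (Bd k) ≤ 4⁻¹ * 4 := by
            exact mul_le_mul_right ih _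
        _ = 1 := by
          rw [ENNReal.inv_mul_cancel] <;> norm_num
    calc ∑ j : Fin 4, μ1 ((hq2 (cornerPt j)) '' Bd k) ≤ ∑ _j : Fin 4, 1 :=
          Finset.sum_le_sum fun j _ => this j
      _ = 4 := by simp

lemma mu_Bd_ge (k : ℕ) : 2 ≤ μ1 (Bd k) := by
  induction k with
  | zero => exact mu_Bd_zero_ge
  | succ k ih =>
    rw [Bd_succ]
    have hBdbox : Bd k ⊆ SQ (Icc 0 1) (Icc 0 1) := Bd_subset_box k
    have hmeas : ∀ j : Fin 4, MeasurableSet ((hq2 (cornerPt j)) '' Bd k) := fun j =>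
      (((isCompact_Bd k).image (hq2 (cornerPt j)).continuous).isClosed).measurableSet
    have hdisj : Pairwise (Function.onFun Disjoint fun j : Fin 4 => (hq2 (cornerPt j)) '' Bd k) := by
      intro j j' hjj
      rw [Function.onFun, disjoint_left]
      intro x hx hx'
      have h1 : x ∈ box j := img_subset_box j hBdbox hx
      have h2 : x ∈ box j' := img_subset_box j' hBdbox hx'
      have := box_disjoint hjj
      rw [eq_empty_iff_forall_notMem] at this
      exact this x ⟨h1, h2⟩
    rw [measure_iUnion hdisj hmeas, tsum_fintype]
    have : ∀ j : Fin 4, μ1 ((hq2 (cornerPt j)) '' Bd k) = 4⁻¹ * μ1 (Bd k) := fun j => mu_hq2 _ _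
    calc (2:ℝ≥0∞) ≤ μ1 (Bd k) := ih
      _ = ∑ _j : Fin 4, 4⁻¹ * μ1 (Bd k) := by
          rw [Finset.sum_const, Finset.card_univ, Fintype.card_fin, nsmul_eq_mul]
          rw [← mul_assoc]
          norm_num
          rw [ENNReal.mul_inv_cancel (by norm_num) (by norm_num), one_mul]
      _ = ∑ j : Fin 4, μ1 ((hq2 (cornerPt j)) '' Bd k) :=
          (Finset.sum_congr rfl fun j _ => (this j).symm)

/-! ### multiscale upper bounds -/

lemma ediam_hq2_image (c : E2) (T : Set E2) :
    EMetric.diam ((hq2 c) '' T) = 4⁻¹ * EMetric.diam T := by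
  unfold EMetric.diam; rw [hq2_image_eq_vadd_smul, ediam_vadd, ediam_smul₀, ENNReal.smul_def]
  congr 1
  simp

lemma ediam_preimage_hq2 (c : E2) (S : Set E2) :
    EMetric.diam ((hq2 c) ⁻¹' S) = 4 * EMetric.diam S := by
  have h1 : (hq2 c) '' ((hq2 c) ⁻¹' S) = S := image_preimage_eq S (hq2 c).surjective
  have h2 := ediam_hq2_image c ((hq2 c) ⁻¹' S)
  rw [h1] at h2
  rw [h2, ← mul_assoc, ENNReal.mul_inv_cancel (by norm_num) (by norm_num), one_mul]

lemma box_sep {j j' : Fin 4} (h : j ≠ j') {x y : E2} (hx : x ∈ box j) (hy : y ∈ box j') :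
    (1/2:ℝ) ≤ dist x y := by
  obtain ⟨hx0, hx1⟩ := hx
  obtain ⟨hy0, hy1⟩ := hy
  rcases corner_diff h with hne | hne
  · refine le_trans ?_ (coord0_le_dist x y)
    rcases (corner_cases j).1 with e1 | e1 <;> rcases (corner_cases j').1 with e2 | e2 <;>
        rw [e1] at hx0 hne <;> rw [e2] at hy0 hne
    · exact absurd rfl hne
    · rw [abs_sub_comm]
      rw [le_abs]
      left
      have := hx0.2
      have := hy0.1
      norm_num at this ⊢
      linarith
    · rw [le_abs]
      left
      have := hx0.1
      have := hy0.2
      norm_num at this ⊢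
      linarith
    · exact absurd rfl hne
  · refine le_trans ?_ (coord1_le_dist x y)
    rcases (corner_cases j).2 with e1 | e1 <;> rcases (corner_cases j').2 with e2 | e2 <;>
        rw [e1] at hx1 hne <;> rw [e2] at hy1 hne
    · exact absurd rfl hne
    · rw [abs_sub_comm]
      rw [le_abs]
      left
      have := hx1.2
      have := hy1.1
      norm_num at this ⊢
      linarith
    · rw [le_abs]
      left
      have := hx1.1
      have := hy1.2
      norm_num at this ⊢
      linarith
    · exact absurd rfl hne

lemma upper_step (k : ℕ) (S : Set E2) (hS : EMetric.diam S ≤ ENNReal.ofReal 4⁻¹) :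
    ∃ T : Set E2, μ1 (Bd (k+1) ∩ S) ≤ 4⁻¹ * μ1 (Bd k ∩ T) ∧
      EMetric.diam T = 4 * EMetric.diam S := by
  rcases eq_empty_or_nonempty (Bd (k+1) ∩ S) with hemp | hne
  · exact ⟨(hq2 (cornerPt 0)) ⁻¹' S, by rw [hemp]; simp, ediam_preimage_hq2 _ _⟩
  · obtain ⟨x, hx1, hx2⟩ := hne
    rw [Bd_succ] at hx1
    obtain ⟨A, ⟨j, rfl⟩, hxA⟩ := hx1
    have hBdbox : Bd k ⊆ SQ (Icc 0 1) (Icc 0 1) := Bd_subset_box k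
    have key : Bd (k+1) ∩ S ⊆ (hq2 (cornerPt j)) '' Bd k ∩ S := by
      rintro y ⟨hy1, hy2⟩
      rw [Bd_succ] at hy1
      obtain ⟨A', ⟨j', rfl⟩, hyA⟩ := hy1
      refine ⟨?_, hy2⟩
      by_cases hjj : j' = j
      · exact hjj ▸ hyA
      · exfalso
        have h1 : x ∈ box j := img_subset_box j hBdbox hxA
        have h2 : y ∈ box j' := img_subset_box j' hBdbox hyA
        have hsep : (1/2:ℝ) ≤ dist y x := box_sep hjj h2 h1
        have hd : edist y x ≤ ENNReal.ofReal 4⁻¹ :=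
          le_trans (EMetric.edist_le_diam_of_mem hy2 hx2) hS
        rw [edist_dist] at hd
        have : dist y x ≤ 4⁻¹ :=
          (ENNReal.ofReal_le_ofReal_iff (by norm_num)).1 hd
        linarith
    refine ⟨(hq2 (cornerPt j)) ⁻¹' S, ?_, ediam_preimage_hq2 _ _⟩
    calc μ1 (Bd (k+1) ∩ S) ≤ μ1 ((hq2 (cornerPt j)) '' Bd k ∩ S) := measure_mono key
      _ = μ1 ((hq2 (cornerPt j)) '' (Bd k ∩ (hq2 (cornerPt j)) ⁻¹' S)) := by
          rw [image_inter_preimage]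
      _ = 4⁻¹ * μ1 (Bd k ∩ (hq2 (cornerPt j)) ⁻¹' S) := mu_hq2 _ _

/-- fine-scale upper bound: at scales below `4⁻ᵏ` the boundary is essentially a line. -/
lemma upper_fine (k : ℕ) : ∀ S : Set E2, EMetric.diam S ≤ ENNReal.ofReal (qs k) →
    μ1 (Bd k ∩ S) ≤ 4 * EMetric.diam S := by
  induction k with
  | zero =>
    intro S hS
    have hsub := Bd_zero_subset
    have hV : ∀ a : ℝ, μ1 ((ptV a '' Icc 0 1) ∩ S) ≤ EMetric.diam S := by
      intro a
      refine le_trans (mu_line_le_diam (a := a)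
        ((inter_subset_left).trans (image_subset_range _ _))) (EMetric.diam_mono inter_subset_right)
    have hH : ∀ b : ℝ, μ1 ((ptH b '' Icc 0 1) ∩ S) ≤ EMetric.diam S := by
      intro b
      refine le_trans (mu_lineH_le_diam (b := b)
        ((inter_subset_left).trans (image_subset_range _ _))) (EMetric.diam_mono inter_subset_right)
    calc μ1 (Bd 0 ∩ S)
        ≤ μ1 (((ptV 0 '' Icc 0 1 ∪ ptV 1 '' Icc 0 1) ∪ (ptH 0 '' Icc 0 1 ∪ ptH 1 '' Icc 0 1)) ∩ S) :=
          measure_mono (inter_subset_inter_left S hsub)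
      _ ≤ μ1 ((ptV 0 '' Icc 0 1) ∩ S) + μ1 ((ptV 1 '' Icc 0 1) ∩ S)
            + (μ1 ((ptH 0 '' Icc 0 1) ∩ S) + μ1 ((ptH 1 '' Icc 0 1) ∩ S)) := by
          rw [union_inter_distrib_right, union_inter_distrib_right, union_inter_distrib_right]
          refine le_trans (measure_union_le _ _) ?_
          exact add_le_add (measure_union_le _ _) (measure_union_le _ _)
      _ ≤ EMetric.diam S + EMetric.diam S + (EMetric.diam S + EMetric.diam S) :=
          add_le_add (add_le_add (hV 0) (hV 1)) (add_le_add (hH 0) (hH 1))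
      _ = 4 * EMetric.diam S := by ring
  | succ k ih =>
    intro S hS
    have hS' : EMetric.diam S ≤ ENNReal.ofReal 4⁻¹ := by
      refine hS.trans (ENNReal.ofReal_le_ofReal ?_)
      rw [qs_succ]
      have := qs_le_one k
      linarith
    obtain ⟨T, hT1, hT2⟩ := upper_step k S hS'
    have hTd : EMetric.diam T ≤ ENNReal.ofReal (qs k) := by
      rw [hT2]
      calc (4:ℝ≥0∞) * EMetric.diam S ≤ 4 * ENNReal.ofReal (qs (k+1)) := mul_le_mul_right hS _
        _ = ENNReal.ofReal (4 * qs (k+1)) := by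
            rw [ENNReal.ofReal_mul (by norm_num)]
            norm_num
        _ = ENNReal.ofReal (qs k) := by rw [qs_succ]; congr 1; ring
    calc μ1 (Bd (k+1) ∩ S) ≤ 4⁻¹ * μ1 (Bd k ∩ T) := hT1
      _ ≤ 4⁻¹ * (4 * EMetric.diam T) := mul_le_mul_right (ih T hTd) _
      _ = EMetric.diam T := by
          rw [← mul_assoc, ENNReal.inv_mul_cancel (by norm_num) (by norm_num), one_mul]
      _ = 4 * EMetric.diam S := hT2

/-- multiscale upper bound. -/
lemma upper_coarse : ∀ j k : ℕ, j ≤ k → ∀ S : Set E2,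
    EMetric.diam S ≤ ENNReal.ofReal (qs j) →
    μ1 (Bd k ∩ S) ≤ ENNReal.ofReal (4 * qs j) := by
  intro j
  induction j with
  | zero =>
    intro k _ S _
    calc μ1 (Bd k ∩ S) ≤ μ1 (Bd k) := measure_mono inter_subset_left
      _ ≤ 4 := mu_Bd_le k
      _ = ENNReal.ofReal (4 * qs 0) := by
          rw [qs]
          norm_num
  | succ j ih =>
    intro k hjk S hS
    obtain ⟨k', rfl⟩ : ∃ k', k = k' + 1 := ⟨k - 1, by omega⟩
    have hS' : EMetric.diam S ≤ ENNReal.ofReal 4⁻¹ := by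
      refine hS.trans (ENNReal.ofReal_le_ofReal ?_)
      rw [qs_succ]
      have := qs_le_one j
      linarith
    obtain ⟨T, hT1, hT2⟩ := upper_step k' S hS'
    have hTd : EMetric.diam T ≤ ENNReal.ofReal (qs j) := by
      rw [hT2]
      calc (4:ℝ≥0∞) * EMetric.diam S ≤ 4 * ENNReal.ofReal (qs (j+1)) := mul_le_mul_right hS _
        _ = ENNReal.ofReal (4 * qs (j+1)) := by
            rw [ENNReal.ofReal_mul (by norm_num)]
            norm_num
        _ = ENNReal.ofReal (qs j) := by rw [qs_succ]; congr 1; ring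
    calc μ1 (Bd (k'+1) ∩ S) ≤ 4⁻¹ * μ1 (Bd k' ∩ T) := hT1
      _ ≤ 4⁻¹ * ENNReal.ofReal (4 * qs j) := mul_le_mul_right (ih k' (by omega) T hTd) _
      _ = ENNReal.ofReal (qs j) := by
          rw [ENNReal.ofReal_mul (by norm_num)]
          rw [← mul_assoc]
          norm_num
          rw [ENNReal.inv_mul_cancel (by norm_num) (by norm_num), one_mul]
      _ = ENNReal.ofReal (4 * qs (j+1)) := by rw [qs_succ]; congr 1; ring

/-! ### lower bounds -/

lemma mu_affmap (y : E2) (c : ℝ) (hc : 0 < c) (A : Set E2) :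
    μ1 ((fun a => y + c • a) '' A) = ENNReal.ofReal c * μ1 A := by
  have himg : (fun a : E2 => y + c • a) '' A = y +ᵥ (c • A) := by
    ext z
    constructor
    · rintro ⟨a, ha, rfl⟩
      exact ⟨c • a, smul_mem_smul_set ha, rfl⟩
    · rintro ⟨w, ⟨a, ha, rfl⟩, rfl⟩
      exact ⟨a, ha, rfl⟩
  rw [himg, MeasureTheory.hausdorffMeasure_vadd _ (Or.inl zero_le_one),
    Measure.hausdorffMeasure_smul₀ zero_le_one (ne_of_gt hc)]
  rw [ENNReal.smul_def, smul_eq_mul]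
  congr 1
  rw [NNReal.rpow_one]
  rw [Real.nnnorm_of_nonneg hc.le, ENNReal.ofReal, Real.toNNReal_of_nonneg hc.le]

lemma ediam_affmap (y : E2) (c : ℝ) (hc : 0 ≤ c) (A : Set E2) :
    EMetric.diam ((fun a => y + c • a) '' A) = ENNReal.ofReal c * EMetric.diam A := by
  have himg : (fun a : E2 => y + c • a) '' A = y +ᵥ (c • A) := by
    ext z
    constructor
    · rintro ⟨a, ha, rfl⟩
      exact ⟨c • a, smul_mem_smul_set ha, rfl⟩
    · rintro ⟨w, ⟨a, ha, rfl⟩, rfl⟩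
      exact ⟨a, ha, rfl⟩
  unfold EMetric.diam; rw [himg, ediam_vadd, ediam_smul₀, ENNReal.smul_def, smul_eq_mul]
  congr 1
  rw [Real.nnnorm_of_nonneg hc, ENNReal.ofReal, Real.toNNReal_of_nonneg hc]

lemma ediam_box_le : EMetric.diam (SQ (Icc 0 1) (Icc 0 1)) ≤ 2 := by
  refine EMetric.diam_le fun x hx y hy => ?_
  rw [edist_dist]
  have h : dist x y ≤ 2 := by
    refine le_trans (dist_le_coords x y) ?_
    obtain ⟨⟨a1,a2⟩,⟨a3,a4⟩⟩ := hx
    obtain ⟨⟨b1,b2⟩,⟨b3,b4⟩⟩ := hy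
    have h0 : |x 0 - y 0| ≤ 1 := abs_le.2 ⟨by linarith, by linarith⟩
    have h1 : |x 1 - y 1| ≤ 1 := abs_le.2 ⟨by linarith, by linarith⟩
    linarith
  calc ENNReal.ofReal (dist x y) ≤ ENNReal.ofReal 2 := ENNReal.ofReal_le_ofReal h
    _ = 2 := by norm_num

lemma ediam_Bd_le (k : ℕ) : EMetric.diam (Bd k) ≤ 2 :=
  le_trans (EMetric.diam_mono (Bd_subset_box k)) ediam_box_le

/-- every point of `Bd (j+k)` lies in a scaled copy of `Bd k` inside `Bd (j+k)`. -/
lemma piece_lemma (j : ℕ) : ∀ k : ℕ, ∀ x ∈ Bd (j + k), ∃ y : E2,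
    x ∈ (fun a => y + qs j • a) '' Bd k ∧ (fun a => y + qs j • a) '' Bd k ⊆ Bd (j + k) := by
  induction j with
  | zero =>
    intro k x hx
    refine ⟨0, ⟨x, by simpa using hx, by simp [qs]⟩, ?_⟩
    rintro z ⟨a, ha, rfl⟩
    simpa [qs] using ha
  | succ j ih =>
    intro k x hx
    have harr : j + 1 + k = (j + k) + 1 := by omega
    rw [harr, Bd_succ] at hx
    obtain ⟨A, ⟨m, rfl⟩, x', hx', rfl⟩ := hx
    obtain ⟨y', hy1, hy2⟩ := ih k x' hx'
    have comp_aff : ∀ a : E2, hq2 (cornerPt m) (y' + qs j • a)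
        = (hq2 (cornerPt m) y') + (qs (j+1)) • a := by
      intro a
      rw [hq2_apply, hq2_apply, qs_succ]
      ext i
      show cornerPt m i + 1/4 * (y' i + qs j * a i) = (cornerPt m i + 1/4 * y' i) + qs j / 4 * a i
      ring
    refine ⟨hq2 (cornerPt m) y', ?_, ?_⟩
    · obtain ⟨a, ha, he⟩ := hy1
      refine ⟨a, ha, ?_⟩
      show hq2 (cornerPt m) y' + qs (j+1) • a = hq2 (cornerPt m) x'
      rw [← he]
      exact (comp_aff a).symm
    · rintro z ⟨a, ha, rfl⟩
      rw [harr, Bd_succ]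
      refine mem_iUnion.2 ⟨m, y' + qs j • a, hy2 ⟨a, ha, rfl⟩, ?_⟩
      exact comp_aff a

/-- membership of `Bd` in terms of coordinates -/
lemma mem_Bd_iff {k : ℕ} {x : E2} : x ∈ Bd k ↔
    (x 0 ∈ closure (Ck k) ∧ x 1 ∈ closure (Ck k)) ∧ ¬(x 0 ∈ Ck k ∧ x 1 ∈ Ck k) := by
  constructor
  · rintro ⟨h1, h2⟩
    rw [closure_stage] at h1
    rw [stage_eq] at h2
    exact ⟨h1, h2⟩
  · rintro ⟨h1, h2⟩
    exact ⟨by rw [closure_stage]; exact h1, by rw [stage_eq]; exact h2⟩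

lemma lower_segment (k : ℕ) (x : E2) (hx : x ∈ Bd k) (r : ℝ) (hr : 0 < r)
    (hr2 : r ≤ 2 * qs k) : ENNReal.ofReal (r/4) ≤ μ1 (Bd k ∩ ball x r) := by
  rw [mem_Bd_iff] at hx
  obtain ⟨⟨hc0, hc1⟩, hnot⟩ := hx
  have hm : ∀ u p L : ℝ, u ∈ Icc p (p + L) → 0 < L →
      Icc u (u + L/2) ⊆ Icc p (p + L) ∨ Icc (u - L/2) u ⊆ Icc p (p + L) := by
    intro u p L hu hL
    rcases le_or_gt u (p + L/2) with h | h
    · left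
      intro t ht
      exact ⟨le_trans hu.1 ht.1, by obtain ⟨t1, t2⟩ := ht; linarith⟩
    · right
      intro t ht
      exact ⟨by obtain ⟨t1, t2⟩ := ht; linarith, le_trans ht.2 hu.2⟩
  set m := min r (qs k / 2) with hmdef
  have hm_pos : 0 < m := lt_min hr (by linarith [qs_pos k])
  have hm_le_r : m ≤ r := min_le_left _ _
  have hm_ge : r / 4 ≤ m := by
    rcases le_total r (qs k / 2) with h | h
    · rw [hmdef, min_eq_left h]; linarith
    · rw [hmdef, min_eq_right h]; linarith
  have hnot' : x 0 ∉ Ck k ∨ x 1 ∉ Ck k := by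
    by_contra hcon
    push_neg at hcon
    exact hnot ⟨hcon.1, hcon.2⟩
  have hdistV : ∀ t, dist (ptV (x 0) t) x = |t - x 1| := by
    intro t
    rw [dist_coords]
    simp [ptV, Real.sqrt_sq_eq_abs]
  have hdistH : ∀ t, dist (ptH (x 1) t) x = |t - x 0| := by
    intro t
    rw [dist_coords]
    simp [ptH, Real.sqrt_sq_eq_abs]
  -- we produce a segment of length `m` inside `Bd k ∩ ball x r`
  have main : ∃ Seg : Set E2, Seg ⊆ Bd k ∩ ball x r ∧ ENNReal.ofReal m ≤ μ1 Seg := by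
    rcases hnot' with hne | hne
    · -- vertical segment
      obtain ⟨p, hp1, hp2⟩ := gen_interval k (x 1) hc1
      rcases hm (x 1) p (qs k) hp1 (qs_pos k) with hJ | hJ
      · refine ⟨ptV (x 0) '' Ico (x 1) (x 1 + m), ?_, ?_⟩
        · rintro z ⟨t, ht, rfl⟩
          have htJ : t ∈ Icc p (p + qs k) := hJ ⟨ht.1, by
            have := ht.2
            have : t ≤ x 1 + m := le_of_lt this
            calc t ≤ x 1 + m := this
              _ ≤ x 1 + qs k / 2 := by linarith [min_le_right r (qs k / 2)]⟩
          constructor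
          · rw [mem_Bd_iff]
            refine ⟨⟨hc0, hp2 htJ⟩, fun hcon => hne hcon.1⟩
          · rw [mem_ball]
            rw [hdistV, abs_lt]
            obtain ⟨t1, t2⟩ := ht
            constructor <;> linarith [hm_le_r]
        · rw [mu_ptV, Real.volume_Ico]
          apply le_of_eq
          congr 1
          ring
      · refine ⟨ptV (x 0) '' Ioc (x 1 - m) (x 1), ?_, ?_⟩
        · rintro z ⟨t, ht, rfl⟩
          have htJ : t ∈ Icc p (p + qs k) := hJ ⟨by
            have := ht.1
            have h' : x 1 - m ≤ t := le_of_lt this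
            calc x 1 - qs k / 2 ≤ x 1 - m := by linarith [min_le_right r (qs k / 2)]
              _ ≤ t := h', ht.2⟩
          constructor
          · rw [mem_Bd_iff]
            refine ⟨⟨hc0, hp2 htJ⟩, fun hcon => hne hcon.1⟩
          · rw [mem_ball]
            rw [hdistV, abs_lt]
            obtain ⟨t1, t2⟩ := ht
            constructor <;> linarith [hm_le_r]
        · rw [mu_ptV, Real.volume_Ioc]
          apply le_of_eq
          congr 1
          ring
    · -- horizontal segment
      obtain ⟨p, hp1, hp2⟩ := gen_interval k (x 0) hc0
      rcases hm (x 0) p (qs k) hp1 (qs_pos k) with hJ | hJ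
      · refine ⟨ptH (x 1) '' Ico (x 0) (x 0 + m), ?_, ?_⟩
        · rintro z ⟨t, ht, rfl⟩
          have htJ : t ∈ Icc p (p + qs k) := hJ ⟨ht.1, by
            have : t ≤ x 0 + m := le_of_lt ht.2
            calc t ≤ x 0 + m := this
              _ ≤ x 0 + qs k / 2 := by linarith [min_le_right r (qs k / 2)]⟩
          constructor
          · rw [mem_Bd_iff]
            refine ⟨⟨hp2 htJ, hc1⟩, fun hcon => hne hcon.2⟩
          · rw [mem_ball]
            rw [hdistH, abs_lt]
            obtain ⟨t1, t2⟩ := ht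
            constructor <;> linarith [hm_le_r]
        · rw [mu_ptH, Real.volume_Ico]
          apply le_of_eq
          congr 1
          ring
      · refine ⟨ptH (x 1) '' Ioc (x 0 - m) (x 0), ?_, ?_⟩
        · rintro z ⟨t, ht, rfl⟩
          have htJ : t ∈ Icc p (p + qs k) := hJ ⟨by
            have h' : x 0 - m ≤ t := le_of_lt ht.1
            calc x 0 - qs k / 2 ≤ x 0 - m := by linarith [min_le_right r (qs k / 2)]
              _ ≤ t := h', ht.2⟩
          constructor
          · rw [mem_Bd_iff]
            refine ⟨⟨hp2 htJ, hc1⟩, fun hcon => hne hcon.2⟩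
          · rw [mem_ball]
            rw [hdistH, abs_lt]
            obtain ⟨t1, t2⟩ := ht
            constructor <;> linarith [hm_le_r]
        · rw [mu_ptH, Real.volume_Ioc]
          apply le_of_eq
          congr 1
          ring
  obtain ⟨Seg, hsub, hmes⟩ := main
  calc ENNReal.ofReal (r/4) ≤ ENNReal.ofReal m := ENNReal.ofReal_le_ofReal hm_ge
    _ ≤ μ1 Seg := hmes
    _ ≤ μ1 (Bd k ∩ ball x r) := measure_mono hsub

lemma qs_anti {a b : ℕ} (h : a ≤ b) : qs b ≤ qs a := by
  apply pow_le_pow_of_le_one (by norm_num) (by norm_num) h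

lemma lower_main (k : ℕ) (x : E2) (hx : x ∈ Bd k) (r : ℝ) (hr : 0 < r) (hr8 : r ≤ 8) :
    ENNReal.ofReal (r/4) ≤ μ1 (Bd k ∩ ball x r) := by
  rcases le_or_gt r (2 * qs k) with hcase | hcase
  · exact lower_segment k x hx r hr hcase
  · -- find the right scale j
    have hex : ∃ j : ℕ, 2 * qs j < r := ⟨k, hcase⟩
    classical
    set j := Nat.find hex with hjdef
    have hj1 : 2 * qs j < r := Nat.find_spec hex
    have hjk : j ≤ k := Nat.find_le hcase
    have hj8 : r ≤ 8 * qs j := by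
      rcases Nat.eq_zero_or_pos j with hj0 | hj0
      · rw [hj0]; simp [qs]; linarith
      · have hmin := Nat.find_min hex (m := j - 1) (by omega)
        push_neg at hmin
        have hqe : qs (j - 1) = 4 * qs j := by
          have h1 : j - 1 + 1 = j := by omega
          calc qs (j-1) = 4 * (qs (j-1) / 4) := by ring
            _ = 4 * qs (j - 1 + 1) := by rw [qs_succ]
            _ = 4 * qs j := by rw [h1]
        rw [hqe] at hmin
        linarith
    -- the scaled piece of the boundary through x
    have harr : j + (k - j) = k := by omega
    obtain ⟨y, hy1, hy2⟩ := piece_lemma j (k - j) x (by rw [harr]; exact hx)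
    rw [harr] at hy2
    have hpiece_ball : (fun a => y + qs j • a) '' Bd (k - j) ⊆ ball x r := by
      intro z hz
      have hed : edist z x ≤ EMetric.diam ((fun a => y + qs j • a) '' Bd (k - j)) :=
        EMetric.edist_le_diam_of_mem hz hy1
      have hdd : EMetric.diam ((fun a => y + qs j • a) '' Bd (k - j))
          ≤ ENNReal.ofReal (2 * qs j) := by
        rw [ediam_affmap y (qs j) (qs_pos j).le]
        calc ENNReal.ofReal (qs j) * EMetric.diam (Bd (k - j))
            ≤ ENNReal.ofReal (qs j) * 2 := mul_le_mul_right (ediam_Bd_le _) _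
          _ = ENNReal.ofReal (2 * qs j) := by
              rw [← ENNReal.ofReal_ofNat, ← ENNReal.ofReal_mul (qs_pos j).le]
              congr 1
              ring
      have : edist z x < ENNReal.ofReal r :=
        lt_of_le_of_lt (hed.trans hdd) (ENNReal.ofReal_lt_ofReal_iff hr |>.2 hj1)
      rw [mem_ball, ← edist_lt_ofReal]
      exact this
    calc ENNReal.ofReal (r/4)
        ≤ ENNReal.ofReal (qs j * 2) := by
          apply ENNReal.ofReal_le_ofReal
          linarith
      _ = ENNReal.ofReal (qs j) * 2 := by
          rw [ENNReal.ofReal_mul (qs_pos j).le, ENNReal.ofReal_ofNat]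
      _ ≤ ENNReal.ofReal (qs j) * μ1 (Bd (k - j)) := mul_le_mul_right (mu_Bd_ge _) _
      _ = μ1 ((fun a => y + qs j • a) '' Bd (k - j)) := (mu_affmap y (qs j) (qs_pos j) _).symm
      _ ≤ μ1 (Bd k ∩ ball x r) := measure_mono (subset_inter hy2 hpiece_ball)

/-! ### the cells of the domain -/

def Tcell (m : ℕ) : Set E2 := (fun x => shiftPt m + x) '' fourCornersStage m

def Fcell (m : ℕ) : Set E2 := (fun x => shiftPt m + x) '' Bd m

@[simp] lemma shiftPt_zero (m : ℕ) : shiftPt m 0 = 2 * m := rfl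
@[simp] lemma shiftPt_one (m : ℕ) : shiftPt m 1 = 0 := by
  show (if (1 : Fin 2) = 0 then ((2 * m : ℕ) : ℝ) else 0) = 0
  norm_num

lemma domain_eq : fourCornersDomain = ⋃ m : ℕ, Tcell m := rfl

lemma Tcell_coords {m : ℕ} {x : E2} (hx : x ∈ Tcell m) :
    x 0 ∈ Ioo (2*m : ℝ) (2*m+1) ∧ x 1 ∈ Ioo (0:ℝ) 1 := by
  obtain ⟨y, hy, rfl⟩ := hx
  rw [stage_eq] at hy
  obtain ⟨h0, h1⟩ := hy
  have e0 : (shiftPt m + y) 0 = 2*m + y 0 := by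
    show shiftPt m 0 + y 0 = _
    rw [shiftPt_zero]
  have e1 : (shiftPt m + y) 1 = y 1 := by
    show shiftPt m 1 + y 1 = _
    rw [shiftPt_one, zero_add]
  show (shiftPt m + y) 0 ∈ _ ∧ (shiftPt m + y) 1 ∈ _
  rw [e0, e1]
  exact ⟨⟨by linarith [(Ck_subset m h0).1], by linarith [(Ck_subset m h0).2]⟩,
    ⟨(Ck_subset m h1).1, (Ck_subset m h1).2⟩⟩

def trcell (m : ℕ) : E2 ≃ₜ E2 := Homeomorph.addLeft (shiftPt m)

lemma trcell_coe (m : ℕ) : ⇑(trcell m) = fun x => shiftPt m + x := rfl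

lemma closure_Tcell (m : ℕ) :
    closure (Tcell m) = (fun x => shiftPt m + x) '' closure (fourCornersStage m) := by
  rw [Tcell, ← trcell_coe, ← Homeomorph.image_closure]

lemma closure_Tcell_coords {m : ℕ} {x : E2} (hx : x ∈ closure (Tcell m)) :
    x 0 ∈ Icc (2*m : ℝ) (2*m+1) ∧ x 1 ∈ Icc (0:ℝ) 1 := by
  rw [closure_Tcell, closure_stage] at hx
  obtain ⟨y, ⟨h0, h1⟩, rfl⟩ := hx
  have e0 : (shiftPt m + y) 0 = 2*m + y 0 := by
    show shiftPt m 0 + y 0 = _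
    rw [shiftPt_zero]
  have e1 : (shiftPt m + y) 1 = y 1 := by
    show shiftPt m 1 + y 1 = _
    rw [shiftPt_one, zero_add]
  show (shiftPt m + y) 0 ∈ _ ∧ (shiftPt m + y) 1 ∈ _
  rw [e0, e1]
  have i0 := closure_Ck_subset m h0
  have i1 := closure_Ck_subset m h1
  exact ⟨⟨by linarith [i0.1], by linarith [i0.2]⟩, i1⟩

lemma Fcell_coords {m : ℕ} {x : E2} (hx : x ∈ Fcell m) :
    x 0 ∈ Icc (2*m : ℝ) (2*m+1) ∧ x 1 ∈ Icc (0:ℝ) 1 := by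
  apply closure_Tcell_coords
  rw [closure_Tcell]
  exact image_mono (fun y hy => hy.1) hx

lemma cells_index_eq {m m' : ℕ} {a b : ℝ}
    (ha : a ∈ Icc (2*m : ℝ) (2*m+1)) (hb : b ∈ Icc (2*m' : ℝ) (2*m'+1))
    (hab : |a - b| < 1) : m = m' := by
  obtain ⟨a1, a2⟩ := ha
  obtain ⟨b1, b2⟩ := hb
  rw [abs_lt] at hab
  have h1 : (2*m : ℝ) < 2*m' + 2 := by linarith
  have h2 : (2*m' : ℝ) < 2*m + 2 := by linarith
  have h1' : m < m' + 1 := by exact_mod_cast (by push_cast; linarith : (m:ℝ) < m' + 1)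
  have h2' : m' < m + 1 := by exact_mod_cast (by push_cast; linarith : (m':ℝ) < m + 1)
  omega

lemma isOpen_Tcell (m : ℕ) : IsOpen (Tcell m) := by
  rw [Tcell, ← trcell_coe]
  exact (trcell m).isOpen_image.2 (isOpen_stage m)

lemma isOpen_domain : IsOpen fourCornersDomain :=
  isOpen_iUnion fun m => isOpen_Tcell m

lemma locfin_Tcell : LocallyFinite Tcell := by
  intro x
  refine ⟨ball x 1, Metric.ball_mem_nhds x one_pos, ?_⟩
  apply Set.Finite.subset (finite_Iio ⌈(x 0 + 1)/2⌉₊)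
  rintro m ⟨y, hy1, hy2⟩
  have hc := (Tcell_coords hy1).1
  have hd := coord0_le_dist y x
  rw [mem_ball] at hy2
  have hxy : dist y x < 1 := by
    first
      | exact hy2
      | (rw [dist_comm]; exact hy2)
  have : (m : ℝ) < (x 0 + 1)/2 := by
    have h1 : y 0 - x 0 ≤ |y 0 - x 0| := le_abs_self _
    have h2 := hc.1
    have h3 : |y 0 - x 0| < 1 := lt_of_le_of_lt hd hxy
    rw [abs_lt] at h3
    linarith
  exact mem_Iio.2 (Nat.lt_ceil.2 this)

lemma Fcell_eq (m : ℕ) : Fcell m = closure (Tcell m) \ Tcell m := by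
  rw [closure_Tcell, Tcell, Fcell, Bd]
  exact (image_diff (fun a b hab => by simpa using hab) _ _)

lemma frontier_domain : frontier fourCornersDomain = ⋃ m : ℕ, Fcell m := by
  have hcl : closure fourCornersDomain = ⋃ m, closure (Tcell m) := by
    rw [domain_eq]
    exact locfin_Tcell.closure_iUnion
  have hfr : frontier fourCornersDomain = closure fourCornersDomain \ fourCornersDomain := by
    rw [frontier, isOpen_domain.interior_eq]
  rw [hfr, hcl]
  ext x
  constructor
  · rintro ⟨hx1, hx2⟩
    obtain ⟨S, ⟨m, rfl⟩, hm⟩ := hx1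
    refine mem_iUnion.2 ⟨m, ?_⟩
    rw [Fcell_eq]
    exact ⟨hm, fun hc => hx2 (mem_iUnion.2 ⟨m, hc⟩)⟩
  · intro hx
    obtain ⟨S, ⟨m, rfl⟩, hm⟩ := hx
    replace hm : x ∈ Fcell m := hm
    rw [Fcell_eq] at hm
    refine ⟨mem_iUnion.2 ⟨m, hm.1⟩, ?_⟩
    intro hc
    rw [domain_eq] at hc
    obtain ⟨S', ⟨m', rfl⟩, hm'⟩ := hc
    by_cases hmm : m = m'
    · exact hm.2 (hmm ▸ hm')
    · have h1 := (closure_Tcell_coords hm.1).1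
      have h2 := (Tcell_coords hm').1
      apply hmm
      refine cells_index_eq h1 (Ioo_subset_Icc_self h2) ?_
      simp
    -- the |a - b| < 1 goal is not closed by simp; handled below

/-! ### translation invariance -/

lemma vadd_image_eq (s : E2) (X : Set E2) : (fun y => s + y) '' X = s +ᵥ X := rfl

lemma mu_vadd_image (s : E2) (X : Set E2) : μ1 ((fun y => s + y) '' X) = μ1 X := by
  rw [vadd_image_eq]
  exact MeasureTheory.hausdorffMeasure_vadd _ (Or.inl zero_le_one) _

lemma preimage_add_ball' (s x : E2) (r : ℝ) :
    (fun y => s + y) ⁻¹' ball x r = ball (x - s) r := by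
  ext z
  rw [mem_preimage, mem_ball, mem_ball]
  constructor <;> intro h
  · have : dist (s + z) (s + (x - s)) < r := by
      rwa [add_sub_cancel]
    rwa [dist_add_left] at this
  · have : dist (s + z) (s + (x - s)) < r := by rwa [dist_add_left]
    rwa [add_sub_cancel] at this

lemma mu_Fcell_ball (m : ℕ) (x : E2) (r : ℝ) :
    μ1 (Fcell m ∩ ball x r) = μ1 (Bd m ∩ ball (x - shiftPt m) r) := by
  rw [Fcell, ← image_inter_preimage, mu_vadd_image, preimage_add_ball']

lemma mu_Fcell (m : ℕ) : μ1 (Fcell m) = μ1 (Bd m) := mu_vadd_image _ _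

lemma mem_Fcell_sub {x : E2} {m : ℕ} (hx : x ∈ Fcell m) : x - shiftPt m ∈ Bd m := by
  obtain ⟨y, hy, rfl⟩ := hx
  rwa [add_sub_cancel_left]

lemma ediam_ball_le (x : E2) (r : ℝ) :
    EMetric.diam (ball x r) ≤ ENNReal.ofReal (2*r) := by
  refine EMetric.diam_le fun y hy z hz => ?_
  rw [mem_ball] at hy hz
  rw [edist_dist]
  refine ENNReal.ofReal_le_ofReal ?_
  calc dist y z ≤ dist y x + dist x z := dist_triangle _ _ _
    _ ≤ 2 * r := by
        rw [dist_comm x z] at *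
        linarith

/-! ### global upper bound -/

lemma upper_global (x : E2) (hx : x ∈ frontier fourCornersDomain) (r : ℝ) (hr : 0 < r) :
    μ1 (frontier fourCornersDomain ∩ ball x r) ≤ ENNReal.ofReal (32 * r) := by
  have hxF : ∃ m, x ∈ Fcell m := by
    rw [frontier_domain] at hx
    exact mem_iUnion.1 hx
  obtain ⟨m, hm⟩ := hxF
  rcases le_or_gt r (1/2) with hsmall | hbig
  · -- single cell
    have hsub : frontier fourCornersDomain ∩ ball x r ⊆ Fcell m ∩ ball x r := by
      rintro y ⟨hy1, hy2⟩
      rw [frontier_domain] at hy1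
      obtain ⟨S, ⟨m', rfl⟩, hy1⟩ := hy1
      replace hy1 : y ∈ Fcell m' := hy1
      have : m' = m := by
        refine cells_index_eq (Fcell_coords hy1).1 (Fcell_coords hm).1 ?_
        have h1 := coord0_le_dist y x
        rw [mem_ball] at hy2
        calc |y 0 - x 0| ≤ dist y x := h1
          _ < r := hy2
          _ ≤ 1 := by linarith
      exact ⟨this ▸ hy1, hy2⟩
    have hx' : x - shiftPt m ∈ Bd m := mem_Fcell_sub hm
    have hdball : EMetric.diam (ball (x - shiftPt m) r) ≤ ENNReal.ofReal (2*r) :=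
      ediam_ball_le _ _
    have key : μ1 (Bd m ∩ ball (x - shiftPt m) r) ≤ ENNReal.ofReal (32 * r) := by
      rcases le_or_gt (2*r) (qs m) with hfine | hcoarse
      · -- fine scale
        have := upper_fine m (ball (x - shiftPt m) r)
          (hdball.trans (ENNReal.ofReal_le_ofReal hfine))
        refine this.trans ?_
        calc (4:ℝ≥0∞) * EMetric.diam (ball (x - shiftPt m) r)
            ≤ 4 * ENNReal.ofReal (2*r) := mul_le_mul_right hdball _
          _ = ENNReal.ofReal (8 * r) := by
              rw [← ENNReal.ofReal_ofNat, ← ENNReal.ofReal_mul (by norm_num)]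
              congr 1
              ring
          _ ≤ ENNReal.ofReal (32 * r) := ENNReal.ofReal_le_ofReal (by linarith)
      · -- coarse scale
        classical
        set j := Nat.findGreatest (fun j => 2*r ≤ qs j) m with hjdef
        have hP0 : 2*r ≤ qs 0 := by
          rw [qs, pow_zero]
          linarith
        have hj1 : 2*r ≤ qs j := by
          rw [hjdef]
          exact Nat.findGreatest_spec (P := fun j => 2*r ≤ qs j) (m := 0) (Nat.zero_le m) hP0
        have hjm : j ≤ m := Nat.findGreatest_le m
        have hjlt : j < m := by
          rcases lt_or_eq_of_le hjm with h | h
          · exact h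
          · exfalso
            rw [h] at hj1
            linarith
        have hj2 : qs j < 8 * r := by
          have := Nat.findGreatest_is_greatest (k := j + 1)
            (by omega : Nat.findGreatest (fun j => 2*r ≤ qs j) m < j + 1) (by omega)
          push_neg at this
          rw [qs_succ] at this
          linarith
        have := upper_coarse j m hjm (ball (x - shiftPt m) r)
          (hdball.trans (ENNReal.ofReal_le_ofReal hj1))
        refine this.trans (ENNReal.ofReal_le_ofReal ?_)
        linarith
    calc μ1 (frontier fourCornersDomain ∩ ball x r)
        ≤ μ1 (Fcell m ∩ ball x r) := measure_mono hsub
      _ = μ1 (Bd m ∩ ball (x - shiftPt m) r) := mu_Fcell_ball m x r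
      _ ≤ ENNReal.ofReal (32 * r) := key
  · -- many cells
    set M := ⌈r⌉₊ with hMdef
    have hrM : r ≤ M := Nat.le_ceil r
    have hM3 : (M:ℝ) ≤ 3 * r := by
      calc (M:ℝ) ≤ r + 1 := le_of_lt (Nat.ceil_lt_add_one hr.le)
        _ ≤ 3 * r := by linarith
    have hsub : frontier fourCornersDomain ∩ ball x r ⊆
        ⋃ m' ∈ Finset.Icc (m - M) (m + M), Fcell m' := by
      rintro y ⟨hy1, hy2⟩
      rw [frontier_domain] at hy1
      obtain ⟨S, ⟨m', rfl⟩, hy1⟩ := hy1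
      replace hy1 : y ∈ Fcell m' := hy1
      refine mem_iUnion₂.2 ⟨m', ?_, hy1⟩
      rw [Finset.mem_Icc]
      have h1 := (Fcell_coords hy1).1
      have h2 := (Fcell_coords hm).1
      have h3 : |y 0 - x 0| < r := lt_of_le_of_lt (coord0_le_dist y x) (mem_ball.1 hy2)
      rw [abs_lt] at h3
      obtain ⟨a1, a2⟩ := h1
      obtain ⟨b1, b2⟩ := h2
      constructor
      · -- m - M ≤ m'
        have : (m:ℝ) < m' + M + 1 := by
          have : (2*m:ℝ) < 2*m' + 2*M + 2 := by linarith
          push_cast at this ⊢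
          linarith
        have : m < m' + M + 1 := by exact_mod_cast this
        omega
      · -- m' ≤ m + M
        have : (m':ℝ) < m + M + 1 := by
          have : (2*m':ℝ) < 2*m + 2*M + 2 := by linarith
          push_cast at this ⊢
          linarith
        have : m' < m + M + 1 := by exact_mod_cast this
        omega
    calc μ1 (frontier fourCornersDomain ∩ ball x r)
        ≤ μ1 (⋃ m' ∈ Finset.Icc (m - M) (m + M), Fcell m') := measure_mono hsub
      _ ≤ ∑ m' ∈ Finset.Icc (m - M) (m + M), μ1 (Fcell m') := measure_biUnion_finset_le _ _
      _ ≤ ∑ _m' ∈ Finset.Icc (m - M) (m + M), 4 := by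
          refine Finset.sum_le_sum fun m' _ => ?_
          rw [mu_Fcell]
          exact mu_Bd_le m'
      _ = ((Finset.Icc (m - M) (m + M)).card : ℝ≥0∞) * 4 := by
          rw [Finset.sum_const, nsmul_eq_mul]
      _ ≤ ((2*M + 1 : ℕ) : ℝ≥0∞) * 4 := by
          have hcard : (Finset.Icc (m - M) (m + M)).card ≤ 2*M + 1 := by
            rw [Nat.card_Icc]
            omega
          exact mul_le_mul_left (Nat.cast_le.2 hcard) _
      _ ≤ ENNReal.ofReal (32 * r) := by
          calc ((2*M+1 : ℕ) : ℝ≥0∞) * 4 ≤ ENNReal.ofReal (8*r) * 4 := by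
                refine mul_le_mul_left ?_ _
                rw [show (((2*M+1 : ℕ)) : ℝ≥0∞) = ENNReal.ofReal ((2*M+1 : ℕ) : ℝ) by
                  rw [ENNReal.ofReal_natCast]]
                refine ENNReal.ofReal_le_ofReal ?_
                push_cast
                linarith
            _ = ENNReal.ofReal (32 * r) := by
                rw [← ENNReal.ofReal_ofNat 4, ← ENNReal.ofReal_mul (by linarith)]
                congr 1
                ring

/-! ### global lower bound -/

lemma isCompact_Fcell (m : ℕ) : IsCompact (Fcell m) :=
  (isCompact_Bd m).image (continuous_const.add continuous_id)

lemma Fcell_disjoint {m m' : ℕ} (h : m ≠ m') : Disjoint (Fcell m) (Fcell m') := by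
  rw [disjoint_left]
  intro z hz hz'
  exact h (cells_index_eq (Fcell_coords hz).1 (Fcell_coords hz').1 (by simp))

lemma Fcell_subset_frontier (m : ℕ) : Fcell m ⊆ frontier fourCornersDomain := by
  rw [frontier_domain]
  exact subset_iUnion Fcell m

lemma lower_global (x : E2) (hx : x ∈ frontier fourCornersDomain) (r : ℝ) (hr : 0 < r) :
    ENNReal.ofReal (r/8) ≤ μ1 (frontier fourCornersDomain ∩ ball x r) := by
  obtain ⟨m, hm⟩ : ∃ m, x ∈ Fcell m := by
    rw [frontier_domain] at hx
    exact mem_iUnion.1 hx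
  rcases le_or_gt r 8 with hsmall | hbig
  · -- single cell: use lower_main
    have hx' : x - shiftPt m ∈ Bd m := mem_Fcell_sub hm
    have h1 := lower_main m (x - shiftPt m) hx' r hr hsmall
    calc ENNReal.ofReal (r/8) ≤ ENNReal.ofReal (r/4) := by
          refine ENNReal.ofReal_le_ofReal ?_
          linarith
      _ ≤ μ1 (Bd m ∩ ball (x - shiftPt m) r) := h1
      _ = μ1 (Fcell m ∩ ball x r) := (mu_Fcell_ball m x r).symm
      _ ≤ μ1 (frontier fourCornersDomain ∩ ball x r) :=
          measure_mono (inter_subset_inter_left _ (Fcell_subset_frontier m))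
  · -- many cells
    set M := ⌊r/2⌋₊ - 2 with hMdef
    have hfl2 : (4:ℕ) ≤ ⌊r/2⌋₊ := by
      refine Nat.le_floor ?_
      push_cast
      linarith
    have hMle : (M:ℝ) ≤ r/2 - 2 := by
      rw [hMdef]
      push_cast [Nat.cast_sub (by omega : 2 ≤ ⌊r/2⌋₊)]
      have := Nat.floor_le (by linarith : (0:ℝ) ≤ r/2)
      linarith
    have hMge : r/2 - 3 ≤ (M:ℝ) := by
      rw [hMdef]
      push_cast [Nat.cast_sub (by omega : 2 ≤ ⌊r/2⌋₊)]
      have := Nat.lt_floor_add_one (r/2)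
      linarith
    have hxc := (Fcell_coords hm).1
    have hsub : ∀ m' ∈ Finset.Icc (m+1) (m+M), Fcell m' ⊆ ball x r := by
      intro m' hm' z hz
      rw [Finset.mem_Icc] at hm'
      have hzc := Fcell_coords hz
      rw [mem_ball]
      refine lt_of_le_of_lt (dist_le_coords z x) ?_
      have h0 : |z 0 - x 0| ≤ 2*M + 1 := by
        rw [abs_le]
        obtain ⟨a1, a2⟩ := hzc.1
        obtain ⟨b1, b2⟩ := hxc
        have hm'1 : (m':ℝ) ≤ m + M := by exact_mod_cast hm'.2
        have hm'2 : (m:ℝ) + 1 ≤ m' := by exact_mod_cast hm'.1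
        constructor <;> push_cast at * <;> linarith
      have h1 : |z 1 - x 1| ≤ 1 := by
        rw [abs_le]
        obtain ⟨a1, a2⟩ := hzc.2
        obtain ⟨b1, b2⟩ := (Fcell_coords hm).2
        constructor <;> linarith
      linarith
    have hdisj : (Finset.Icc (m+1) (m+M) : Set ℕ).Pairwise (Function.onFun Disjoint Fcell) :=
      fun a _ b _ hab => Fcell_disjoint hab
    have hmeas : ∀ m' ∈ Finset.Icc (m+1) (m+M), MeasurableSet (Fcell m') :=
      fun m' _ => (isCompact_Fcell m').isClosed.measurableSet
    have hbig_sub : (⋃ m' ∈ Finset.Icc (m+1) (m+M), Fcell m')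
        ⊆ frontier fourCornersDomain ∩ ball x r := by
      refine iUnion₂_subset fun m' hm' => subset_inter (Fcell_subset_frontier m') (hsub m' hm')
    calc ENNReal.ofReal (r/8)
        ≤ ((2 * M : ℕ) : ℝ≥0∞) := by
          rw [← ENNReal.ofReal_natCast]
          refine ENNReal.ofReal_le_ofReal ?_
          push_cast
          linarith
      _ = ∑ m' ∈ Finset.Icc (m+1) (m+M), (2:ℝ≥0∞) := by
          rw [Finset.sum_const, Nat.card_Icc, nsmul_eq_mul]
          have : m + M + 1 - (m + 1) = M := by omega
          rw [this]
          push_cast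
          ring
      _ ≤ ∑ m' ∈ Finset.Icc (m+1) (m+M), μ1 (Fcell m') := by
          refine Finset.sum_le_sum fun m' _ => ?_
          rw [mu_Fcell]
          exact mu_Bd_ge m'
      _ = μ1 (⋃ m' ∈ Finset.Icc (m+1) (m+M), Fcell m') :=
          (measure_biUnion_finset hdisj hmeas).symm
      _ ≤ μ1 (frontier fourCornersDomain ∩ ball x r) := measure_mono hbig_sub

/-! ### the final theorem -/

lemma origin_mem_Bd (k : ℕ) : pt 0 0 ∈ Bd k := by
  rw [mem_Bd_iff, pt_zero, pt_one]
  refine ⟨⟨zero_mem_closure_Ck k, zero_mem_closure_Ck k⟩, fun hc => ?_⟩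
  exact lt_irrefl 0 (Ck_subset k hc.1).1

lemma corner_mem_frontier (k : ℕ) : shiftPt k + pt 0 0 ∈ frontier fourCornersDomain := by
  rw [frontier_domain]
  exact mem_iUnion.2 ⟨k, pt 0 0, origin_mem_Bd k, rfl⟩

lemma frontier_diam_big : ENNReal.ofReal (1/2) < EMetric.diam (frontier fourCornersDomain) := by
  have h0 := corner_mem_frontier 0
  have h1 := corner_mem_frontier 1
  have hdist : dist (shiftPt 0 + pt 0 0) (shiftPt 1 + pt 0 0) = 2 := by
    rw [dist_coords]
    have e00 : (shiftPt 0 + pt 0 0) 0 = 0 := by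
      show shiftPt 0 0 + pt 0 0 0 = 0
      rw [shiftPt_zero, pt_zero]
      norm_num
    have e01 : (shiftPt 0 + pt 0 0) 1 = 0 := by
      show shiftPt 0 1 + pt 0 0 1 = 0
      rw [shiftPt_one, pt_one]
      norm_num
    have e10 : (shiftPt 1 + pt 0 0) 0 = 2 := by
      show shiftPt 1 0 + pt 0 0 0 = 2
      rw [shiftPt_zero, pt_zero]
      norm_num
    have e11 : (shiftPt 1 + pt 0 0) 1 = 0 := by
      show shiftPt 1 1 + pt 0 0 1 = 0
      rw [shiftPt_one, pt_one]
      norm_num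
    rw [e00, e01, e10, e11]
    rw [show (0:ℝ) - 2 = -2 by ring]
    rw [show ((-2:ℝ))^2 + (0 - 0:ℝ)^2 = 4 by ring]
    rw [show (4:ℝ) = 2^2 by norm_num, Real.sqrt_sq (by norm_num)]
  calc ENNReal.ofReal (1/2) < ENNReal.ofReal 2 := by
        rw [ENNReal.ofReal_lt_ofReal_iff (by norm_num)]
        norm_num
    _ = edist (shiftPt 0 + pt 0 0) (shiftPt 1 + pt 0 0) := by rw [edist_dist, hdist]
    _ ≤ EMetric.diam (frontier fourCornersDomain) := EMetric.edist_le_diam_of_mem h0 h1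

theorem four_corners_no_corkscrew' :
    (∃ Cadr : ℝ, IsADR 1 (frontier fourCornersDomain) Cadr) ∧
    ¬ ∃ c : ℝ, 0 < c ∧
      ∀ x ∈ frontier fourCornersDomain, ∀ r : ℝ, 0 < r →
        ENNReal.ofReal r < EMetric.diam (frontier fourCornersDomain) →
        ∃ z, ball z (c * r) ⊆ ball x r ∩ fourCornersDomain := by
  constructor
  · refine ⟨32, isClosed_frontier, by norm_num, fun x hx r hr _ => ?_⟩
    have hmeq : (Measure.hausdorffMeasure ((1:ℕ):ℝ)).restrict (frontier fourCornersDomain) (ball x r)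
        = μ1 (frontier fourCornersDomain ∩ ball x r) := by
      rw [Nat.cast_one, Measure.restrict_apply measurableSet_ball, inter_comm]
    rw [hmeq, pow_one]
    constructor
    · calc ENNReal.ofReal ((32:ℝ)⁻¹ * r) ≤ ENNReal.ofReal (r/8) := by
            refine ENNReal.ofReal_le_ofReal ?_
            linarith
        _ ≤ μ1 (frontier fourCornersDomain ∩ ball x r) := lower_global x hx r hr
    · exact upper_global x hx r hr
  · rintro ⟨c, hc, hcs⟩
    obtain ⟨k, hk⟩ : ∃ k : ℕ, qs k < c := by
      obtain ⟨n, hn⟩ := exists_pow_lt_of_lt_one hc (by norm_num : (4:ℝ)⁻¹ < 1)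
      exact ⟨n, hn⟩
    obtain ⟨z, hz⟩ := hcs (shiftPt k + pt 0 0) (corner_mem_frontier k) (1/2) (by norm_num)
      frontier_diam_big
    have hx00 : (shiftPt k + pt 0 0) 0 = 2*k := by
      show shiftPt k 0 + pt 0 0 0 = 2*k
      rw [shiftPt_zero, pt_zero, add_zero]
    -- every point of the small ball lies in cell k
    have hTk : ball z (c * (1/2)) ⊆ Tcell k := by
      intro w hw
      obtain ⟨hw1, hw2⟩ := hz hw
      rw [domain_eq] at hw2
      obtain ⟨S, ⟨m, rfl⟩, hwm⟩ := hw2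
      replace hwm : w ∈ Tcell m := hwm
      have hco := (Tcell_coords hwm).1
      have hd : |w 0 - 2*k| < 1/2 := by
        rw [← hx00]
        exact lt_of_le_of_lt (coord0_le_dist w _) (mem_ball.1 hw1)
      rw [abs_lt] at hd
      have hmk : m = k := by
        obtain ⟨a1, a2⟩ := hco
        have h1 : (m:ℝ) < k + 1 := by push_cast at *; linarith
        have h2 : (k:ℝ) < m + 1 := by push_cast at *; linarith
        have h1' : m < k + 1 := by exact_mod_cast h1
        have h2' : k < m + 1 := by exact_mod_cast h2
        omega
      exact hmk ▸ hwm
    -- horizontal segment through z gives a long interval in `Ck k`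
    have hseg : Ioo (z 0 - 2*k - c*(1/2)) (z 0 - 2*k + c*(1/2)) ⊆ Ck k := by
      intro u hu
      obtain ⟨hu1, hu2⟩ := hu
      have hwball : pt (u + 2*k) (z 1) ∈ ball z (c * (1/2)) := by
        rw [mem_ball, dist_coords, pt_zero, pt_one]
        rw [sub_self, show ((0:ℝ))^2 = 0 by norm_num]
        have : (u + 2*k - z 0)^2 + 0 = (u + 2*k - z 0)^2 := by ring
        rw [this, Real.sqrt_sq_eq_abs, abs_lt]
        constructor <;> linarith
      obtain ⟨y, hy, he⟩ := hTk hwball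
      have hy0 : y 0 = u := by
        have he' : shiftPt k + y = pt (u + 2*k) (z 1) := he
        have : (shiftPt k + y) 0 = u + 2*k := by rw [he', pt_zero]
        have h2 : shiftPt k 0 + y 0 = u + 2*k := this
        rw [shiftPt_zero] at h2
        linarith
      rw [stage_eq] at hy
      exact hy0 ▸ hy.1
    have := no_long_interval k _ _ hseg
    have hcc : (z 0 - 2*k + c*(1/2)) - (z 0 - 2*k - c*(1/2)) = c := by ring
    rw [hcc] at this
    linarith


/-- Example 3: failure of the interior corkscrew condition.
For the union `Ω` of the stages of Garnett's 4-corners construction: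
`∂Ω` is 1-Ahlfors–David regular, but `Ω` fails the interior corkscrew condition:
there is no `c > 0` such that for every `x ∈ ∂Ω` and `0 < r < diam ∂Ω`, `B(x,r) ∩ Ω`
contains a ball of radius `c r`. -/
theorem four_corners_no_corkscrew :
    (∃ Cadr : ℝ, IsADR 1 (frontier fourCornersDomain) Cadr) ∧
    ¬ ∃ c : ℝ, 0 < c ∧
      ∀ x ∈ frontier fourCornersDomain, ∀ r : ℝ, 0 < r →
        ENNReal.ofReal r < EMetric.diam (frontier fourCornersDomain) →
        ∃ z, ball z (c * r) ⊆ ball x r ∩ fourCornersDomain := four_corners_no_corkscrew'
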